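/- Let (X, ∘) be a commutative semigroup, φ: X → X a bijection, and define f(S) = φ⁻¹(Σ_{x ∈ S} φ(x)) for finite multisets S over X, where Σ is addition in a commutative monoid structure on X. Suppose ‖f(S) − f*(S)‖ < ε for every multiset S of size at most a (a ≥ 2), where f*(S) = ∘-fold of S. If φ is K₁-Lipschitz and φ⁻¹ is K₂-Lipschitz (with K₁K₂ ≥ 1), then for every multiset S of size b ≥ a, ‖f(S) − f*(S)‖ < ε((aK₁K₂)^⌈log_a b⌉ − 1)/(aK₁K₂ − 1). -/

import Mathlib

namespace Stmt13Aux

variable {α : Type*} (op : α → α → α) [Std.Commutative op] [Std.Associative op]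

/-- Adjoin a unit to the semigroup. -/
def opO : Option α → Option α → Option α
  | none, b => b
  | some a, none => some a
  | some a, some b => some (op a b)

instance : Std.Commutative (opO op) :=
  ⟨by rintro (_ | a) (_ | b) <;> simp [opO] <;> exact Std.Commutative.comm a b⟩

instance : Std.Associative (opO op) :=
  ⟨by rintro (_ | a) (_ | b) (_ | c) <;> simp [opO] <;> exact Std.Associative.assoc a b c⟩

/-- The canonical fold of the semigroup over a multiset, valued in `Option α`. -/
def G (S : Multiset α) : Option α :=
  (S.map some).fold (opO op) none

@[simp] theorem G_zero : G op (0 : Multiset α) = none := rfl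

theorem G_cons (x : α) (s : Multiset α) :
    G op (x ::ₘ s) = opO op (some x) (G op s) := by
  simp only [G, Multiset.map_cons, Multiset.fold_cons_left]

theorem G_add (S T : Multiset α) :
    G op (S + T) = opO op (G op S) (G op T) := by
  have h := Multiset.fold_add (opO op) (none : Option α) (none : Option α)
      (S.map some) (T.map some)
  simpa [G, Multiset.map_add, opO] using h

theorem G_cons_fold (x : α) (s : Multiset α) :
    G op (x ::ₘ s) = some (s.fold op x) := by
  induction s using Multiset.induction generalizing x with
  | empty => simp [G, opO, Multiset.map_singleton, Multiset.fold_singleton]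
  | cons a s ih =>
    have key : op x (s.fold op a) = op a (s.fold op x) := by
      calc op x (s.fold op a) = (x ::ₘ s).fold op a := (Multiset.fold_cons_left op a x s).symm
        _ = s.fold op (op x a) := Multiset.fold_cons'_left op a x s
        _ = s.fold op (op a x) := by rw [show op x a = op a x from Std.Commutative.comm x a]
        _ = (a ::ₘ s).fold op x := (Multiset.fold_cons'_left op x a s).symm
        _ = op a (s.fold op x) := Multiset.fold_cons_left op x a s
    rw [G_cons, ih a, Multiset.fold_cons_left]
    simp [opO, key]

/-- The fold of the semigroup over a nonempty multiset, with a junk default. -/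
def fstar (d₀ : α) (S : Multiset α) : α :=
  (G op S).getD d₀

theorem fstar_cons (d₀ : α) (x : α) (s : Multiset α) :
    fstar op d₀ (x ::ₘ s) = s.fold op x := by
  rw [fstar, G_cons_fold]; rfl

theorem G_eq_some_fstar (d₀ : α) {S : Multiset α} (hS : S ≠ 0) :
    G op S = some (fstar op d₀ S) := by
  obtain ⟨x, hx⟩ := Multiset.exists_mem_of_ne_zero hS
  obtain ⟨t, rfl⟩ := Multiset.exists_cons_of_mem hx
  rw [G_cons_fold, fstar_cons]

theorem G_sum (P : Multiset (Multiset α)) :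
    G op P.sum = (P.map (G op)).fold (opO op) none := by
  induction P using Multiset.induction with
  | empty => simp
  | cons p P ih =>
    rw [Multiset.sum_cons, G_add, ih, Multiset.map_cons, Multiset.fold_cons_left]

theorem fstar_parts (d₀ : α) {P : Multiset (Multiset α)}
    (hP : ∀ p ∈ P, p ≠ 0) :
    fstar op d₀ P.sum = fstar op d₀ (P.map (fstar op d₀)) := by
  unfold fstar
  congr 1
  show G op P.sum = G op (P.map (fstar op d₀))
  rw [G_sum, G, Multiset.map_map]
  congr 1
  exact Multiset.map_congr rfl fun p hp => G_eq_some_fstar op d₀ (hP p hp)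

/-- Partition a nonempty multiset of size `≤ k * m` into at most `k` nonempty parts
of size `≤ m`. -/
theorem exists_partition {β : Type*} (m : ℕ) (hm : 1 ≤ m) :
    ∀ (k : ℕ) (S : Multiset β), S ≠ 0 → S.card ≤ k * m →
      ∃ P : Multiset (Multiset β), P.sum = S ∧ P.card ≤ k ∧
        ∀ p ∈ P, p ≠ 0 ∧ p.card ≤ m := by
  intro k
  induction k with
  | zero =>
    intro S hS hc
    simp only [Nat.zero_mul, Nat.le_zero, Multiset.card_eq_zero] at hc
    exact absurd hc hS
  | succ k ih =>
    intro S hS hc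
    by_cases h : S.card ≤ m
    · exact ⟨{S}, by simp, by simp, by simp [hS, h]⟩
    · push_neg at h
      have hlen : S.toList.length = S.card := Multiset.length_toList S
      have hml : m ≤ S.toList.length := by omega
      set S₁ : Multiset β := (↑(S.toList.take m) : Multiset β) with hS₁
      set S₂ : Multiset β := (↑(S.toList.drop m) : Multiset β) with hS₂d
      have hsum : S₁ + S₂ = S := by
        rw [hS₁, hS₂d]
        rw [show ((S.toList.take m : List β) : Multiset β) + ((S.toList.drop m : List β) : Multiset β) = ((S.toList.take m ++ S.toList.drop m : List β) : Multiset β) from (Multiset.coe_add _ _).symm, List.take_append_drop, Multiset.coe_toList]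
      have hc1 : S₁.card = m := by
        rw [hS₁, Multiset.coe_card, List.length_take]
        omega
      have hc2 : S₂.card = S.card - m := by
        rw [hS₂d, Multiset.coe_card, List.length_drop]
        omega
      have hS₂ : S₂ ≠ 0 := by
        intro h0
        rw [h0, Multiset.card_zero] at hc2
        omega
      have hkm : (k + 1) * m = k * m + m := by ring
      obtain ⟨P, hP1, hP2, hP3⟩ := ih S₂ hS₂ (by rw [hc2]; omega)
      refine ⟨S₁ ::ₘ P, ?_, ?_, ?_⟩
      · rw [Multiset.sum_cons, hP1, hsum]
      · rw [Multiset.card_cons]; omega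
      · intro p hp
        rcases Multiset.mem_cons.mp hp with rfl | hp
        · refine ⟨?_, by omega⟩
          intro h0; rw [h0, Multiset.card_zero] at hc1; omega
        · exact hP3 p hp

theorem map_sum_sum {β γ : Type*} [AddCommMonoid γ] (f : β → γ)
    (P : Multiset (Multiset β)) :
    (P.sum.map f).sum = (P.map fun p => (p.map f).sum).sum := by
  induction P using Multiset.induction with
  | empty => simp
  | cons p P ih => simp [Multiset.map_add, ih]

theorem sum_map_sub' {β γ : Type*} [AddCommGroup γ] (f g : β → γ) (s : Multiset β) :
    (s.map f).sum - (s.map g).sum = (s.map fun x => f x - g x).sum := by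
  induction s using Multiset.induction with
  | empty => simp
  | cons a s ih => simp only [Multiset.map_cons, Multiset.sum_cons, ← ih]; abel

/-- The key induction: error bound for multisets of size at most `a ^ n`. -/
theorem key {E : Type*} [SeminormedAddCommGroup E]
    (op : E → E → E) [Std.Commutative op] [Std.Associative op]
    (φ : E ≃ E) (K₁ K₂ : ℝ) (hK₁ : 0 ≤ K₁) (hK₂ : 0 ≤ K₂)
    (hφ : ∀ x y : E, ‖φ x - φ y‖ ≤ K₁ * ‖x - y‖)
    (a : ℕ) (ha : 2 ≤ a) (ε : ℝ) (hε : 0 ≤ ε) (d₀ : E)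
    (hC : 1 < (a : ℝ) * K₁ * K₂)
    (hφinv : ∀ x y : E, ‖φ.symm x - φ.symm y‖ ≤ K₂ * ‖x - y‖)
    (hsmall : ∀ S : Multiset E, S ≠ 0 → S.card ≤ a →
      ‖φ.symm ((S.map φ).sum) - fstar op d₀ S‖ < ε) :
    ∀ n : ℕ, 1 ≤ n → ∀ S : Multiset E, S ≠ 0 → S.card ≤ a ^ n →
      ‖φ.symm ((S.map φ).sum) - fstar op d₀ S‖ <
        ε * (((a : ℝ) * K₁ * K₂) ^ n - 1) / ((a : ℝ) * K₁ * K₂ - 1) := by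
  have hC1 : (0:ℝ) < (a : ℝ) * K₁ * K₂ - 1 := by linarith
  intro n hn
  induction n, hn using Nat.le_induction with
  | base =>
    intro S hS hcard
    have heq : ε * (((a : ℝ) * K₁ * K₂) ^ 1 - 1) / ((a : ℝ) * K₁ * K₂ - 1) = ε := by
      rw [pow_one, mul_div_assoc, div_self (ne_of_gt hC1), mul_one]
    rw [heq]
    exact hsmall S hS (by simpa using hcard)
  | succ n hn IH =>
    intro S hS hcard
    set En : ℝ := ε * (((a : ℝ) * K₁ * K₂) ^ n - 1) / ((a : ℝ) * K₁ * K₂ - 1) with hEndef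
    have hCpow : (1:ℝ) ≤ ((a : ℝ) * K₁ * K₂) ^ n := one_le_pow₀ (le_of_lt hC)
    have hEn : 0 ≤ En := by
      apply div_nonneg (mul_nonneg hε (by linarith)) (le_of_lt hC1)
    obtain ⟨P, hPsum, hPcard, hPmem⟩ := exists_partition (a ^ n)
      (Nat.one_le_iff_ne_zero.mpr (pow_ne_zero n (by omega))) a S hS
      (by calc S.card ≤ a ^ (n + 1) := hcard
            _ = a * a ^ n := by ring)
    have hPne : P ≠ 0 := by
      intro h0; rw [h0, Multiset.sum_zero] at hPsum; exact hS hPsum.symm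
    set f : Multiset E → E := fun p => φ.symm ((p.map φ).sum) with hfdef
    set g : Multiset E → E := fun p => fstar op d₀ p with hgdef
    have h1 : (S.map φ).sum = (((P.map f)).map φ).sum := by
      rw [← hPsum, map_sum_sum, Multiset.map_map]
      refine congrArg Multiset.sum (Multiset.map_congr rfl fun p hp => ?_)
      show (p.map φ).sum = φ (f p)
      rw [hfdef]
      exact (φ.apply_symm_apply _).symm
    have h2 : fstar op d₀ S = fstar op d₀ (P.map g) := by
      rw [← hPsum, fstar_parts op d₀ (fun p hp => (hPmem p hp).1)]
    have hT'ne : P.map g ≠ 0 := by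
      simpa [Multiset.map_eq_zero] using hPne
    have hT'card : (P.map g).card ≤ a := by
      rwa [Multiset.card_map]
    have hsub : ((P.map f).map φ).sum - ((P.map g).map φ).sum
        = (P.map fun p => φ (f p) - φ (g p)).sum := by
      rw [Multiset.map_map, Multiset.map_map]
      exact sum_map_sub' _ _ _
    have hnorm1 : ‖((P.map f).map φ).sum - ((P.map g).map φ).sum‖
        ≤ (a : ℝ) * (K₁ * En) := by
      rw [hsub]
      refine le_trans (norm_multiset_sum_le _) ?_
      rw [Multiset.map_map]
      refine le_trans (Multiset.sum_le_card_nsmul _ (K₁ * En) ?_) ?_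
      · intro r hr
        obtain ⟨p, hp, rfl⟩ := Multiset.mem_map.mp hr
        have h4 : ‖f p - g p‖ ≤ En :=
          le_of_lt (IH p (hPmem p hp).1 (hPmem p hp).2)
        calc ((fun x => ‖x‖) ∘ fun p => φ (f p) - φ (g p)) p
            = ‖φ (f p) - φ (g p)‖ := rfl
          _ ≤ K₁ * ‖f p - g p‖ := hφ (f p) (g p)
          _ ≤ K₁ * En := mul_le_mul_of_nonneg_left h4 hK₁
      · rw [Multiset.card_map, nsmul_eq_mul]
        refine mul_le_mul_of_nonneg_right ?_ (mul_nonneg hK₁ hEn)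
        exact_mod_cast hPcard
    have hmain : ‖φ.symm (((P.map f).map φ).sum) - φ.symm (((P.map g).map φ).sum)‖
        ≤ K₂ * ((a : ℝ) * (K₁ * En)) :=
      le_trans (hφinv _ _) (mul_le_mul_of_nonneg_left hnorm1 hK₂)
    have tri : ‖φ.symm ((S.map φ).sum) - fstar op d₀ S‖ ≤
        ‖φ.symm (((P.map f).map φ).sum) - φ.symm (((P.map g).map φ).sum)‖ +
        ‖φ.symm (((P.map g).map φ).sum) - fstar op d₀ (P.map g)‖ := by
      rw [h1, h2]
      exact norm_sub_le_norm_sub_add_norm_sub _ _ _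
    have hsmallT : ‖φ.symm (((P.map g).map φ).sum) - fstar op d₀ (P.map g)‖ < ε :=
      hsmall (P.map g) hT'ne hT'card
    have total : ‖φ.symm ((S.map φ).sum) - fstar op d₀ S‖ <
        K₂ * ((a : ℝ) * (K₁ * En)) + ε :=
      lt_of_le_of_lt tri (add_lt_add_of_le_of_lt hmain hsmallT)
    have alg : K₂ * ((a : ℝ) * (K₁ * En)) + ε
        = ε * (((a : ℝ) * K₁ * K₂) ^ (n + 1) - 1) / ((a : ℝ) * K₁ * K₂ - 1) := by
      have hne : (a : ℝ) * K₁ * K₂ - 1 ≠ 0 := ne_of_gt hC1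
      rw [hEndef, eq_div_iff hne]
      have hX : ε * (((a : ℝ) * K₁ * K₂) ^ n - 1) / ((a : ℝ) * K₁ * K₂ - 1) * ((a : ℝ) * K₁ * K₂ - 1)
          = ε * (((a : ℝ) * K₁ * K₂) ^ n - 1) := div_mul_cancel₀ _ hne
      linear_combination ((a : ℝ) * K₁ * K₂) * hX
    rwa [alg] at total

end Stmt13Aux

theorem stmt_13 {d : ℕ}
    (op : EuclideanSpace ℝ (Fin d) → EuclideanSpace ℝ (Fin d) → EuclideanSpace ℝ (Fin d))
    [Std.Commutative op] [Std.Associative op]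
    (φ : EuclideanSpace ℝ (Fin d) ≃ EuclideanSpace ℝ (Fin d))
    (K₁ K₂ : ℝ) (hK : 1 ≤ K₁ * K₂)
    (hφ : ∀ x y : EuclideanSpace ℝ (Fin d), ‖φ x - φ y‖ ≤ K₁ * ‖x - y‖)
    (hφinv : ∀ x y : EuclideanSpace ℝ (Fin d), ‖φ.symm x - φ.symm y‖ ≤ K₂ * ‖x - y‖)
    (a : ℕ) (ha : 2 ≤ a) (ε : ℝ)
    (hsmall : ∀ (x : EuclideanSpace ℝ (Fin d)) (s : Multiset (EuclideanSpace ℝ (Fin d))),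
      (x ::ₘ s).card ≤ a →
      ‖φ.symm (((x ::ₘ s).map φ).sum) - Multiset.fold op x s‖ < ε) :
    ∀ (x : EuclideanSpace ℝ (Fin d)) (s : Multiset (EuclideanSpace ℝ (Fin d))) (b : ℕ),
      (x ::ₘ s).card = b → a ≤ b →
      ‖φ.symm (((x ::ₘ s).map φ).sum) - Multiset.fold op x s‖ <
        ε * (((a : ℝ) * K₁ * K₂) ^ (⌈Real.logb a b⌉ : ℤ) - 1) / ((a : ℝ) * K₁ * K₂ - 1) := by
  intro x s b hb hab
  have haR : (2:ℝ) ≤ (a:ℝ) := by exact_mod_cast ha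
  have hC : 1 < (a : ℝ) * K₁ * K₂ := by nlinarith
  have hε : 0 < ε := by
    refine lt_of_le_of_lt (norm_nonneg _) (hsmall 0 0 ?_)
    simp only [Multiset.card_cons, Multiset.card_zero]
    omega
  have hb2 : 2 ≤ b := le_trans ha hab
  have hblt : (1:ℝ) < (b:ℝ) := by exact_mod_cast (by omega : 1 < b)
  have halt : (1:ℝ) < (a:ℝ) := by linarith
  have hlogpos : 0 < Real.logb a b := Real.logb_pos halt hblt
  have hceil : 1 ≤ ⌈Real.logb a b⌉ := Int.one_le_ceil_iff.mpr hlogpos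
  set z : ℤ := ⌈Real.logb a b⌉ with hz
  set n : ℕ := z.toNat with hn
  have hzn : (n : ℤ) = z := Int.toNat_of_nonneg (by omega)
  have hn1 : 1 ≤ n := by omega
  have hzpow : ((a : ℝ) * K₁ * K₂) ^ z = ((a : ℝ) * K₁ * K₂) ^ n := by
    rw [← hzn, zpow_natCast]
  have hble : b ≤ a ^ n := by
    have h1 : Real.logb a b ≤ (n : ℝ) := by
      have h := Int.le_ceil (Real.logb a b)
      rw [← hz, ← hzn] at h
      exact_mod_cast h
    have h2 : (b:ℝ) ≤ (a:ℝ) ^ (n:ℝ) :=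
      (Real.logb_le_iff_le_rpow halt (by linarith)).mp h1
    have h3 : (a:ℝ) ^ (n:ℝ) = ((a ^ n : ℕ) : ℝ) := by
      rw [Real.rpow_natCast]; push_cast; ring
    rw [h3] at h2
    exact_mod_cast h2
  rw [hzpow]
  rcases Nat.eq_zero_or_pos d with hd | hd
  · subst hd
    haveI : Subsingleton (EuclideanSpace ℝ (Fin 0)) :=
      ⟨fun u v => by ext i; exact i.elim0⟩
    have heq : φ.symm (((x ::ₘ s).map φ).sum) = Multiset.fold op x s :=
      Subsingleton.elim _ _
    rw [heq, sub_self, norm_zero]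
    have hp : (1:ℝ) < ((a : ℝ) * K₁ * K₂) ^ n := one_lt_pow₀ hC (by omega)
    exact div_pos (mul_pos hε (by linarith)) (by linarith)
  · have hu : (EuclideanSpace.single (⟨0, hd⟩ : Fin d) (1:ℝ)) ≠ 0 := by
      intro h0
      have := congrArg (fun v : EuclideanSpace ℝ (Fin d) => v ⟨0, hd⟩) h0
      simp [EuclideanSpace.single_apply] at this
    set u : EuclideanSpace ℝ (Fin d) := EuclideanSpace.single ⟨0, hd⟩ (1:ℝ) with hudef
    have h2 : 0 < ‖u - 0‖ := by rwa [sub_zero, norm_pos_iff]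
    have hK₁ : 0 < K₁ := by
      have hφu : φ u ≠ φ 0 := fun h => hu (φ.injective h)
      have h1 : 0 < ‖φ u - φ 0‖ := by rwa [norm_pos_iff, sub_ne_zero]
      nlinarith [hφ u 0]
    have hK₂ : 0 < K₂ := by
      have hφu : φ.symm u ≠ φ.symm 0 := fun h => hu (φ.symm.injective h)
      have h1 : 0 < ‖φ.symm u - φ.symm 0‖ := by rwa [norm_pos_iff, sub_ne_zero]
      nlinarith [hφinv u 0]
    have hsmall' : ∀ S : Multiset (EuclideanSpace ℝ (Fin d)), S ≠ 0 → S.card ≤ a →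
        ‖φ.symm ((S.map φ).sum) - Stmt13Aux.fstar op 0 S‖ < ε := by
      intro S hS hc
      obtain ⟨y, hy⟩ := Multiset.exists_mem_of_ne_zero hS
      obtain ⟨t, rfl⟩ := Multiset.exists_cons_of_mem hy
      rw [Stmt13Aux.fstar_cons]
      exact hsmall y t hc
    have hkey := Stmt13Aux.key op φ K₁ K₂ (le_of_lt hK₁) (le_of_lt hK₂) hφ a ha ε
      (le_of_lt hε) 0 hC hφinv hsmall' n hn1 (x ::ₘ s) (Multiset.cons_ne_zero)
      (by rw [hb]; exact hble)
    rwa [Stmt13Aux.fstar_cons] at hkey
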